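/- Let h, k be coprime positive integers. For every point (x,y) ∈ ℂ² with x^(h+k) ≠ y^(hk), the fiber of F_{h,k} over (x,y), i.e. the set {(z,w) ∈ ℂ² : h·z^k + k·w^h = (h+k)·x and z·w = y}, is finite and has exactly h+k elements. -/

import Mathlib

open Polynomial in
lemma sep_of_no_common_root (p : Polynomial ℂ)
    (H : ∀ a : ℂ, p.eval a = 0 → p.derivative.eval a ≠ 0) : p.Separable := by
  rw [Polynomial.Separable, Polynomial.isCoprime_iff_aeval_ne_zero_of_isAlgClosed ℂ ℂ]
  intro a
  by_cases h0 : p.eval a = 0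
  · right; simpa using H a h0
  · left; simpa using h0

open Polynomial in
lemma root_count (p : Polynomial ℂ) (hd : p.natDegree ≠ 0) (hsep : p.Separable) :
    {z : ℂ | p.eval z = 0}.Finite ∧ {z : ℂ | p.eval z = 0}.ncard = p.natDegree := by
  have hp : p ≠ 0 := fun h => hd (by simp [h])
  have hset : {z : ℂ | p.eval z = 0} = ↑p.roots.toFinset := by
    ext z; simp [Polynomial.mem_roots, hp, Polynomial.IsRoot]
  rw [hset]
  refine ⟨(p.roots.toFinset : Finset ℂ).finite_toSet, ?_⟩
  rw [Set.ncard_coe_finset, Multiset.toFinset_card_of_nodup (Polynomial.nodup_roots hsep),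
    ← Polynomial.splits_iff_card_roots.mp (IsAlgClosed.splits p)]

open Polynomial in
lemma pow_root_count (c d : ℂ) (hc : c ≠ 0) (hd : d ≠ 0) (n : ℕ) (hn : 0 < n) :
    {z : ℂ | c * z ^ n = d}.Finite ∧ {z : ℂ | c * z ^ n = d}.ncard = n := by
  set P : Polynomial ℂ := C c * X ^ n - C d with hP
  have heval : ∀ z : ℂ, P.eval z = c * z ^ n - d := by intro z; simp [hP]
  have hdeg : P.natDegree = n := by
    rw [hP]; compute_degree!
    simp [hn.ne', hc]
  have hset : {z : ℂ | c * z ^ n = d} = {z : ℂ | P.eval z = 0} := by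
    ext z; simp [heval, sub_eq_zero]
  have hsep : P.Separable := by
    apply sep_of_no_common_root
    intro a ha
    have haz : a ≠ 0 := by
      rintro rfl
      rw [heval] at ha
      simp [zero_pow hn.ne'] at ha
      exact hd ha
    have hder : P.derivative = C c * (C (n : ℂ) * X ^ (n - 1)) := by
      simp [hP, Polynomial.derivative_X_pow]
    rw [hder]
    simp only [eval_mul, eval_C, eval_pow, eval_X]
    exact mul_ne_zero hc (mul_ne_zero (by exact_mod_cast hn.ne') (pow_ne_zero _ haz))
  rw [hset, ← hdeg]
  exact root_count P (by rw [hdeg]; exact hn.ne') hsep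

/-- For coprime positive integers `h, k`, the fiber of the projection
`F_{h,k} : S_{h,k} → ℂ²` over a point `(x, y)` off the branch curve
`x^(h+k) = y^(hk)` is finite with exactly `h + k` elements. -/
theorem stmt_0 (h k : ℕ) (hh : 0 < h) (hk : 0 < k) (hcop : Nat.Coprime h k)
    (x y : ℂ) (hxy : x ^ (h + k) ≠ y ^ (h * k)) :
    {p : ℂ × ℂ | (h : ℂ) * p.1 ^ k + (k : ℂ) * p.2 ^ h = ((h : ℂ) + (k : ℂ)) * x ∧
        p.1 * p.2 = y}.Finite ∧
    {p : ℂ × ℂ | (h : ℂ) * p.1 ^ k + (k : ℂ) * p.2 ^ h = ((h : ℂ) + (k : ℂ)) * x ∧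
        p.1 * p.2 = y}.ncard = h + k := by
  classical
  have hhc : (h : ℂ) ≠ 0 := Nat.cast_ne_zero.mpr hh.ne'
  have hkc : (k : ℂ) ≠ 0 := Nat.cast_ne_zero.mpr hk.ne'
  have hhkc : (h : ℂ) + k ≠ 0 := by
    have : ((h + k : ℕ) : ℂ) ≠ 0 := Nat.cast_ne_zero.mpr (by omega)
    simpa using this
  by_cases hy : y = 0
  · -- case y = 0
    subst hy
    have hx : x ≠ 0 := by
      rintro rfl
      exact hxy (by rw [zero_pow (by omega : h + k ≠ 0), zero_pow (by positivity : h * k ≠ 0)])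
    have hrhs : ((h : ℂ) + k) * x ≠ 0 := mul_ne_zero hhkc hx
    have hsetA := pow_root_count (h : ℂ) (((h : ℂ) + k) * x) hhc hrhs k hk
    have hsetB := pow_root_count (k : ℂ) (((h : ℂ) + k) * x) hkc hrhs h hh
    set A : Set (ℂ × ℂ) := (fun z => (z, (0 : ℂ))) '' {z : ℂ | (h : ℂ) * z ^ k = ((h : ℂ) + k) * x}
      with hA
    set B : Set (ℂ × ℂ) := (fun w => ((0 : ℂ), w)) '' {w : ℂ | (k : ℂ) * w ^ h = ((h : ℂ) + k) * x}
      with hB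
    have hunion : {p : ℂ × ℂ | (h : ℂ) * p.1 ^ k + (k : ℂ) * p.2 ^ h = ((h : ℂ) + (k : ℂ)) * x ∧
        p.1 * p.2 = 0} = A ∪ B := by
      ext ⟨z, w⟩
      simp only [Set.mem_setOf_eq, Set.mem_union, hA, hB, Set.mem_image, Prod.mk.injEq]
      constructor
      · rintro ⟨e1, e2⟩
        rcases mul_eq_zero.mp e2 with rfl | rfl
        · right
          refine ⟨w, ?_, rfl, rfl⟩
          rw [zero_pow hk.ne'] at e1
          simpa using e1
        · left
          refine ⟨z, ?_, rfl, rfl⟩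
          rw [zero_pow hh.ne'] at e1
          simpa using e1
      · rintro (⟨a, ha, rfl, rfl⟩ | ⟨a, ha, rfl, rfl⟩)
        · exact ⟨by rw [zero_pow hh.ne']; simpa using ha, by ring⟩
        · exact ⟨by rw [zero_pow hk.ne']; simpa using ha, by ring⟩
    have hAfin : A.Finite := hsetA.1.image _
    have hBfin : B.Finite := hsetB.1.image _
    have hAcard : A.ncard = k := by
      rw [hA, Set.ncard_image_of_injective _ (fun a b hab => (Prod.mk.injEq _ _ _ _ ▸ hab).1)]
      exact hsetA.2
    have hBcard : B.ncard = h := by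
      rw [hB, Set.ncard_image_of_injective _ (fun a b hab => (Prod.mk.injEq _ _ _ _ ▸ hab).2)]
      exact hsetB.2
    have hdisj : Disjoint A B := by
      rw [Set.disjoint_left]
      rintro ⟨z, w⟩ hA' hB'
      obtain ⟨a, ha, heq⟩ := hA'
      obtain ⟨b, hb, heq'⟩ := hB'
      have h1 : a = z := congrArg Prod.fst heq
      have h2 : (0 : ℂ) = z := congrArg Prod.fst heq'
      rw [Set.mem_setOf_eq, h1, ← h2, zero_pow hk.ne', mul_zero] at ha
      exact hrhs ha.symm
    rw [hunion]
    refine ⟨hAfin.union hBfin, ?_⟩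
    rw [Set.ncard_union_eq hdisj hAfin hBfin, hAcard, hBcard]
    omega
  · -- case y ≠ 0
    set P : Polynomial ℂ := Polynomial.C (h : ℂ) * Polynomial.X ^ (h + k)
        - Polynomial.C (((h : ℂ) + k) * x) * Polynomial.X ^ h
        + Polynomial.C ((k : ℂ) * y ^ h) with hP
    have heval : ∀ z : ℂ, P.eval z =
        (h : ℂ) * z ^ (h + k) - ((h : ℂ) + k) * x * z ^ h + (k : ℂ) * y ^ h := by
      intro z; simp [hP]
    have hdeg : P.natDegree = h + k := by
      rw [hP]; compute_degree!
      simp [hhc, hh.ne', hk.ne']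
    have hder : ∀ a : ℂ, P.derivative.eval a =
        (h : ℂ) * ((h : ℂ) + k) * (a ^ (h - 1) * (a ^ k - x)) := by
      intro a
      have hsplit : a ^ (h + k - 1) = a ^ (h - 1) * a ^ k := by
        rw [← pow_add]; congr 1; omega
      simp [hP, hsplit, Polynomial.derivative_pow]
      ring
    have hroot0 : ∀ a : ℂ, P.eval a = 0 → a ≠ 0 := by
      intro a ha
      rintro rfl
      rw [heval, zero_pow (by omega : h + k ≠ 0), zero_pow hh.ne'] at ha
      simp at ha
      rcases ha with ha | ha
      · exact hk.ne' ha
      · exact hy ha.1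
    have hsep : P.Separable := by
      apply sep_of_no_common_root
      intro a ha hda
      rw [hder] at hda
      have h0 : a ^ (h - 1) * (a ^ k - x) = 0 := by
        rcases mul_eq_zero.mp hda with h1 | h1
        · exact absurd h1 (mul_ne_zero hhc hhkc)
        · exact h1
      have haz : a ≠ 0 := hroot0 a ha
      rw [heval] at ha
      rcases mul_eq_zero.mp h0 with h1 | h1
      · exact pow_ne_zero _ haz h1
      · have hax : a ^ k = x := sub_eq_zero.mp h1
        have hsplit : a ^ (h + k) = a ^ k * a ^ h := by rw [← pow_add]; congr 1; omega
        rw [hsplit, hax] at ha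
        have hyx : y ^ h = x * a ^ h := by
          have hk' : (k : ℂ) * y ^ h = (k : ℂ) * (x * a ^ h) := by linear_combination ha
          exact mul_left_cancel₀ hkc hk'
        apply hxy
        calc x ^ (h + k) = x ^ h * x ^ k := by rw [← pow_add]
          _ = (a ^ k) ^ h * x ^ k := by rw [hax]
          _ = (x * a ^ h) ^ k := by ring
          _ = (y ^ h) ^ k := by rw [hyx]
          _ = y ^ (h * k) := by rw [← pow_mul]
    have himg : {p : ℂ × ℂ | (h : ℂ) * p.1 ^ k + (k : ℂ) * p.2 ^ h = ((h : ℂ) + (k : ℂ)) * x ∧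
          p.1 * p.2 = y} = (fun z => (z, y / z)) '' {z : ℂ | P.eval z = 0} := by
      ext ⟨z, w⟩
      simp only [Set.mem_setOf_eq, Set.mem_image, heval, Prod.mk.injEq]
      constructor
      · rintro ⟨e1, e2⟩
        have hz : z ≠ 0 := by rintro rfl; rw [zero_mul] at e2; exact hy e2.symm
        have hw : y / z = w := by rw [div_eq_iff hz]; linear_combination -e2
        refine ⟨z, ?_, rfl, hw⟩
        have hsplit : z ^ (h + k) = z ^ k * z ^ h := by rw [← pow_add]; congr 1; omega
        have hyh : y ^ h = z ^ h * w ^ h := by rw [← e2, mul_pow]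
        rw [hsplit, hyh]
        linear_combination z ^ h * e1
      · rintro ⟨a, ha, rfl, rfl⟩
        have haz : a ≠ 0 := hroot0 a (by rw [heval]; exact ha)
        have hsplit : a ^ (h + k) = a ^ k * a ^ h := by rw [← pow_add]; congr 1; omega
        rw [hsplit] at ha
        refine ⟨?_, by field_simp⟩
        rw [div_pow]
        have hah : a ^ h ≠ 0 := pow_ne_zero _ haz
        field_simp
        linear_combination ha
    obtain ⟨hfin, hcard⟩ := root_count P (by omega) hsep
    rw [himg, hdeg] at *
    have hinj : Set.InjOn (fun z : ℂ => (z, y / z)) {z : ℂ | P.eval z = 0} := by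
      intro a _ b _ hab
      exact (Prod.mk.injEq .. ▸ hab).1
    refine ⟨hfin.image _, ?_⟩
    rw [Set.ncard_image_of_injOn hinj]
    rw [hdeg] at hcard
    exact hcard
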